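/- Let M be a symmetric positive semidefinite matrix with α I ⪯ M ⪯ β I for 0 < α ≤ β and let κ = β/α. For every t ≥ 1 there exists a polynomial p of degree at most t−1 (depending only on α, β, t) such that ‖I − M p(M)‖_op ≤ 2 exp(−2t/√κ). -/

import Mathlib

open Matrix

noncomputable def eNorm {d : ℕ} (x : Fin d → ℝ) : ℝ := Real.sqrt (x ⬝ᵥ x)

section aux
open Polynomial Real


lemma T_cosh (θ : ℝ) : ∀ n : ℤ, (Chebyshev.T ℝ n).eval (Real.cosh θ) = Real.cosh (n * θ) := by
  have key : ∀ a : ℝ, 2 * Real.cosh θ * Real.cosh a = Real.cosh (a + θ) + Real.cosh (a - θ) := by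
    intro a; rw [Real.cosh_add, Real.cosh_sub]; ring
  intro n
  induction n using Polynomial.Chebyshev.induct with
  | zero => simp
  | one => simp
  | add_two n h1 h2 =>
      push_cast
      rw [Chebyshev.T_add_two]
      simp only [eval_sub, eval_mul, eval_ofNat, eval_X]
      push_cast at h1 h2
      rw [h1, h2]
      have := key ((n + 1 : ℝ) * θ)
      rw [show ((n:ℝ)+1)*θ + θ = ((n:ℝ)+2)*θ by ring, show ((n:ℝ)+1)*θ - θ = (n:ℝ)*θ by ring] at this
      linarith
  | neg_add_one n h1 h2 =>
      push_cast
      rw [show (-(n:ℤ) - 1 : ℤ) = (-(n:ℤ) + 1) - 2 by ring, Chebyshev.T_sub_two]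
      simp only [eval_sub, eval_mul, eval_ofNat, eval_X]
      push_cast at h1 h2
      rw [show ((-(n:ℤ) + 1 : ℤ) - 1 : ℤ) = -(n:ℤ) by ring] at *
      push_cast
      rw [h1, h2]
      have := key ((-(n:ℝ)) * θ)
      rw [show (-(n:ℝ))*θ + θ = (-(n:ℝ)+1)*θ by ring, show (-(n:ℝ))*θ - θ = (-(n:ℝ)-1)*θ by ring] at this
      linarith

lemma natDegree_T_le : ∀ n : ℕ, (Chebyshev.T ℝ (n : ℤ)).natDegree ≤ n := by
  intro n
  induction n using Nat.strong_induction_on with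
  | _ n ih =>
    match n with
    | 0 => simp
    | 1 => simp
    | (m+2) =>
      push_cast
      rw [Chebyshev.T_add_two]
      refine (natDegree_sub_le _ _).trans ?_
      have h1 := ih (m+1) (by omega)
      have h2 := ih m (by omega)
      have : ((2 : ℝ[X]) * X * Chebyshev.T ℝ (m+1)).natDegree ≤ m + 2 := by
        refine (natDegree_mul_le).trans ?_
        have : ((2:ℝ[X]) * X).natDegree ≤ 1 := by
          refine natDegree_mul_le.trans ?_; simp
        push_cast at h1 ⊢
        omega
      push_cast at h2 this ⊢
      omega

lemma one_sub_mul_exp_le (y : ℝ) (hy : 0 ≤ y) : (1 - y) * Real.exp (2*y) ≤ 1 + y := by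
  have key : ∀ u : ℝ, (1 - u) * Real.exp u ≤ 1 := by
    intro u
    have h := Real.add_one_le_exp (-u)
    have h2 : Real.exp (-u) * Real.exp u = 1 := by
      rw [← Real.exp_add]; simp
    nlinarith [Real.exp_pos u, Real.exp_pos (-u)]
  set f : ℝ → ℝ := fun y => 1 + y - (1 - y) * Real.exp (2*y) with hf
  have hd : ∀ x : ℝ, HasDerivAt f (1 - (1 - 2*x) * Real.exp (2*x)) x := by
    intro x
    have h1 : HasDerivAt (fun y : ℝ => Real.exp (2*y)) (2 * Real.exp (2*x)) x := by
      have := ((hasDerivAt_id x).const_mul 2).exp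
      simpa [mul_comm] using this
    have h2 : HasDerivAt (fun y : ℝ => (1 - y) * Real.exp (2*y))
        ((-1) * Real.exp (2*x) + (1 - x) * (2 * Real.exp (2*x))) x :=
      (((hasDerivAt_id x).const_sub 1).mul h1)
    have h3 := (((hasDerivAt_id x).const_add 1).sub h2)
    exact h3.congr_deriv (by ring)
  have hmono : MonotoneOn f (Set.Ici 0) := by
    apply monotoneOn_of_deriv_nonneg (convex_Ici 0)
    · exact Continuous.continuousOn (by continuity)
    · intro x _; exact (hd x).differentiableAt.differentiableWithinAt
    · intro x _
      rw [(hd x).deriv]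
      have := key (2*x); nlinarith [Real.exp_pos (2*x)]
  have h0 : f 0 = 0 := by simp [hf]
  have := hmono (Set.self_mem_Ici) (Set.mem_Ici.mpr hy) hy
  rw [h0] at this
  simp only [hf] at this
  linarith

lemma cheb_poly (α β : ℝ) (hα : 0 < α) (hαβ : α ≤ β) (t : ℕ) (ht : 1 ≤ t) :
    ∃ q : ℝ[X], q.natDegree ≤ t ∧ q.eval 0 = 1 ∧
      ∀ l ∈ Set.Icc α β, |q.eval l| ≤ 2 * Real.exp (-2 * t / Real.sqrt (β / α)) := by
  have hexp : 0 < 2 * Real.exp (-2 * t / Real.sqrt (β / α)) := by positivity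
  rcases eq_or_lt_of_le hαβ with h | h
  · -- α = β
    subst h
    refine ⟨(1 - C α⁻¹ * X)^t, ?_, ?_, ?_⟩
    · calc ((1 - C α⁻¹ * X)^t).natDegree ≤ t * (1 - C α⁻¹ * X).natDegree := natDegree_pow_le
        _ ≤ t * 1 := by
            refine Nat.mul_le_mul_left _ ((natDegree_sub_le _ _).trans ?_)
            simp only [natDegree_one]
            refine max_le (by omega) ((natDegree_C_mul_le _ _).trans natDegree_X_le)
        _ = t := mul_one t
    · simp
    · intro l hl
      have hlα : l = α := le_antisymm hl.2 hl.1
      subst hlα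
      have h0 : (1:ℝ) - l⁻¹ * l = 0 := by field_simp; norm_num
      simp only [eval_pow, eval_sub, eval_one, eval_mul, eval_C, eval_X, h0]
      rw [zero_pow (by omega : t ≠ 0)]
      simpa using hexp.le
  · -- α < β
    set σ := Real.sqrt (β / α) with hσdef
    have hba : 1 < β / α := (one_lt_div hα).mpr h
    have hσ2 : σ^2 = β / α := Real.sq_sqrt (by positivity)
    have hσ : 1 < σ := by nlinarith [Real.sqrt_nonneg (β/α)]
    have hσ0 : (0:ℝ) < σ := by linarith
    have hβα : 0 < β - α := by linarith
    set u := (σ + 1) / (σ - 1) with hu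
    have hu1 : 1 < u := by rw [hu, lt_div_iff₀ (by linarith)]; linarith
    have hu0 : 0 < u := by linarith
    set θ := Real.log u with hθdef
    have hcosh : Real.cosh θ = (β + α) / (β - α) := by
      rw [Real.cosh_eq, hθdef, Real.exp_log hu0, Real.exp_neg, Real.exp_log hu0, hu]
      have h1 : σ - 1 ≠ 0 := by linarith
      have h2 : σ + 1 ≠ 0 := by linarith
      have hβ : β = α * σ^2 := by rw [hσ2]; field_simp
      have haux : σ^2 * α - α ≠ 0 := by nlinarith
      rw [hβ]
      field_simp [haux]
      have key : (σ ^ 2 * α - α) * (σ ^ 2 * α - α)⁻¹ = 1 := mul_inv_cancel₀ haux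
      rw [eq_div_iff (by nlinarith : σ ^ 2 - 1 ≠ 0)]; ring
    have hθσ : 2 / σ ≤ θ := by
      have h0 : (0:ℝ) ≤ 1/σ := by positivity
      have key := one_sub_mul_exp_le (1/σ) h0
      have key2 : Real.exp (2/σ) * (1 - 1/σ) ≤ 1 + 1/σ := by
        rw [show (2:ℝ)/σ = 2*(1/σ) by ring]; linarith
      have hexpu : Real.exp (2/σ) ≤ u := by
        rw [hu, le_div_iff₀ (by linarith : (0:ℝ) < σ - 1)]
        have e1 : (1 - 1/σ) * σ = σ - 1 := by field_simp
        have e2 : (1 + 1/σ) * σ = σ + 1 := by field_simp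
        nlinarith [mul_le_mul_of_nonneg_right key2 hσ0.le]
      rw [hθdef]
      calc 2/σ = Real.log (Real.exp (2/σ)) := (Real.log_exp _).symm
        _ ≤ Real.log u := Real.log_le_log (Real.exp_pos _) hexpu
    have hcosh_t : (Chebyshev.T ℝ (t:ℤ)).eval ((β + α)/(β - α)) = Real.cosh ((t:ℝ) * θ) := by
      rw [← hcosh, T_cosh]; push_cast; ring_nf
    have hcosh_pos : 0 < Real.cosh ((t:ℝ) * θ) := Real.cosh_pos _
    refine ⟨C ((Real.cosh ((t:ℝ)*θ))⁻¹) *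
      ((Chebyshev.T ℝ (t:ℤ)).comp (C ((β+α)/(β-α)) - C (2/(β-α)) * X)), ?_, ?_, ?_⟩
    · refine (natDegree_C_mul_le _ _).trans (natDegree_comp_le.trans ?_)
      calc (Chebyshev.T ℝ (t:ℤ)).natDegree * (C ((β+α)/(β-α)) - C (2/(β-α)) * X).natDegree
          ≤ t * 1 := by
            refine Nat.mul_le_mul (natDegree_T_le t) ((natDegree_sub_le _ _).trans ?_)
            simp only [natDegree_C]
            exact max_le (by omega) ((natDegree_C_mul_le _ _).trans natDegree_X_le)
        _ = t := mul_one t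
    · simp only [eval_mul, eval_C, eval_comp, eval_sub, eval_mul, eval_X, mul_zero, sub_zero]
      rw [hcosh_t, inv_mul_cancel₀ hcosh_pos.ne']
    · intro l hl
      simp only [eval_mul, eval_C, eval_comp, eval_sub, eval_mul, eval_X]
      set y := (β+α)/(β-α) - 2/(β-α) * l with hy
      have hyeq : y = (β+α-2*l)/(β-α) := by rw [hy]; field_simp
      have hy1 : -1 ≤ y := by rw [hyeq, le_div_iff₀ hβα]; linarith [hl.2]
      have hy2 : y ≤ 1 := by rw [hyeq, div_le_one hβα]; linarith [hl.1]
      have hTy : |(Chebyshev.T ℝ (t:ℤ)).eval y| ≤ 1 := by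
        rw [← Real.cos_arccos hy1 hy2, Chebyshev.T_real_cos]
        exact Real.abs_cos_le_one _
      rw [abs_mul, abs_inv, abs_of_pos hcosh_pos]
      calc (Real.cosh ((t:ℝ)*θ))⁻¹ * |(Chebyshev.T ℝ (t:ℤ)).eval y|
          ≤ (Real.cosh ((t:ℝ)*θ))⁻¹ * 1 :=
            mul_le_mul_of_nonneg_left hTy (by positivity)
        _ = (Real.cosh ((t:ℝ)*θ))⁻¹ := mul_one _
        _ ≤ 2 * Real.exp (-((t:ℝ)*θ)) := by
            have h4 : Real.exp ((t:ℝ)*θ) / 2 ≤ Real.cosh ((t:ℝ)*θ) := by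
              rw [Real.cosh_eq]; linarith [(Real.exp_pos (-((t:ℝ)*θ))).le]
            have h5 : (0:ℝ) < Real.exp ((t:ℝ)*θ)/2 := by positivity
            calc (Real.cosh ((t:ℝ)*θ))⁻¹ ≤ (Real.exp ((t:ℝ)*θ)/2)⁻¹ :=
                  inv_anti₀ h5 h4
              _ = 2 * Real.exp (-((t:ℝ)*θ)) := by rw [Real.exp_neg]; ring
        _ ≤ 2 * Real.exp (-2 * t / σ) := by
            have ht0 : (0:ℝ) ≤ t := Nat.cast_nonneg t
            have h6 : 2*(t:ℝ)/σ ≤ (t:ℝ)*θ := by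
              have := mul_le_mul_of_nonneg_left hθσ ht0
              calc 2*(t:ℝ)/σ = (t:ℝ)*(2/σ) := by ring
                _ ≤ (t:ℝ)*θ := this
            have e : -2*(t:ℝ)/σ = -(2*t/σ) := by ring
            refine mul_le_mul_of_nonneg_left (Real.exp_le_exp.mpr ?_) (by norm_num)
            rw [e]; linarith

-- conjugation lemma
lemma aeval_conj {d : ℕ} (U : Matrix (Fin d) (Fin d) ℝ)
    (hU : U * star U = 1) (hU' : star U * U = 1) (v : Fin d → ℝ) (q : ℝ[X]) :
    Polynomial.aeval (U * Matrix.diagonal v * star U) q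
      = U * Matrix.diagonal (fun i => q.eval (v i)) * star U := by
  induction q using Polynomial.induction_on' with
  | add p r hp hr =>
      rw [map_add, hp, hr]
      have hd : (Matrix.diagonal fun i => (p+r).eval (v i))
          = Matrix.diagonal (fun i => p.eval (v i)) + Matrix.diagonal (fun i => r.eval (v i)) := by
        rw [Matrix.diagonal_add]; simp
      rw [hd]; noncomm_ring
  | monomial n a =>
      have hpow : ∀ m : ℕ, (U * Matrix.diagonal v * star U)^m
          = U * Matrix.diagonal (fun i => v i ^ m) * star U := by
        intro m
        induction m with
        | zero => simpa using hU.symm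
        | succ m ih =>
            rw [pow_succ, ih]
            calc U * Matrix.diagonal (fun i => v i ^ m) * star U * (U * Matrix.diagonal v * star U)
                = U * Matrix.diagonal (fun i => v i ^ m) * (star U * U) * Matrix.diagonal v * star U := by
                  noncomm_ring
              _ = U * (Matrix.diagonal (fun i => v i ^ m) * Matrix.diagonal v) * star U := by
                  rw [hU']; noncomm_ring
              _ = U * Matrix.diagonal (fun i => v i ^ (m+1)) * star U := by
                  rw [Matrix.diagonal_mul_diagonal]
                  have he : (fun i => v i ^ m * v i) = fun i => v i ^ (m+1) := by
                    funext i; rw [pow_succ]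
                  rw [he]
      rw [Polynomial.aeval_monomial, hpow]
      have he : (fun i => (monomial n a).eval (v i)) = a • (fun i => v i ^ n) := by
        funext i; simp [Polynomial.eval_monomial]
      rw [he, Matrix.diagonal_smul, ← Algebra.smul_def, mul_smul_comm, smul_mul_assoc]

-- norm preservation
lemma dot_conj {d : ℕ} (W : Matrix (Fin d) (Fin d) ℝ) (hW : star W * W = 1) (y : Fin d → ℝ) :
    (W *ᵥ y) ⬝ᵥ (W *ᵥ y) = y ⬝ᵥ y := by
  rw [Matrix.dotProduct_mulVec]
  have h1 : (W *ᵥ y) ᵥ* W = y := by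
    rw [← Matrix.mulVec_transpose]
    rw [Matrix.mulVec_mulVec]
    have : Wᵀ * W = 1 := by
      rw [← Matrix.conjTranspose_eq_transpose_of_trivial, ← Matrix.star_eq_conjTranspose, hW]
    rw [this, Matrix.one_mulVec]
  rw [h1]

lemma eNorm_diag_le {d : ℕ} (f : Fin d → ℝ) (c : ℝ) (hc : 0 ≤ c)
    (hf : ∀ i, |f i| ≤ c) (y : Fin d → ℝ) :
    eNorm ((Matrix.diagonal f) *ᵥ y) ≤ c * eNorm y := by
  unfold eNorm
  rw [← Real.sqrt_sq hc, ← Real.sqrt_mul (by positivity)]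
  apply Real.sqrt_le_sqrt
  unfold dotProduct
  simp only [Matrix.mulVec_diagonal]
  rw [Finset.mul_sum]
  apply Finset.sum_le_sum
  intro i _
  have := hf i
  have h2 : (f i)^2 ≤ c^2 := sq_le_sq' (by linarith [abs_nonneg (f i), neg_abs_le (f i)]) (le_trans (le_abs_self _) this)
  nlinarith [sq_nonneg (y i), sq_nonneg (f i * y i)]

open Polynomial Real in
theorem stmt_9 (α β : ℝ) (hα : 0 < α) (hαβ : α ≤ β) (t : ℕ) (ht : 1 ≤ t) :
    ∃ p : Polynomial ℝ, p.natDegree ≤ t - 1 ∧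
      ∀ (d : ℕ) (M : Matrix (Fin d) (Fin d) ℝ), M.IsSymm →
        (∀ x : Fin d → ℝ, α * (x ⬝ᵥ x) ≤ x ⬝ᵥ M.mulVec x ∧
            x ⬝ᵥ M.mulVec x ≤ β * (x ⬝ᵥ x)) →
        ∀ x : Fin d → ℝ,
          eNorm (((1 : Matrix (Fin d) (Fin d) ℝ) - M * Polynomial.aeval M p).mulVec x)
            ≤ 2 * Real.exp (-2 * t / Real.sqrt (β / α)) * eNorm x := by
  obtain ⟨q, hq_deg, hq0, hq_bound⟩ := cheb_poly α β hα hαβ t ht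
  have hc0 : (0:ℝ) ≤ 2 * Real.exp (-2 * t / Real.sqrt (β / α)) := by positivity
  refine ⟨(1 - q).divX, ?_, ?_⟩
  · rw [Polynomial.natDegree_divX_eq_natDegree_tsub_one]
    have h1 : (1 - q).natDegree ≤ t :=
      (natDegree_sub_le _ _).trans (by simpa using hq_deg)
    omega
  · intro d M hMsymm hquad x
    have hM : M.IsHermitian := hMsymm
    have hkey : (1 : Matrix (Fin d) (Fin d) ℝ) - M * Polynomial.aeval M ((1-q).divX)
        = Polynomial.aeval M q := by
      have h2 : (1 - q).divX * X + C ((1-q).coeff 0) = 1 - q := Polynomial.divX_mul_X_add _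
      have h3 : (1 - q).coeff 0 = 0 := by
        rw [Polynomial.coeff_zero_eq_eval_zero]; simp [hq0]
      rw [h3, map_zero, add_zero] at h2
      have h4 : q = 1 - X * (1 - q).divX := by
        rw [mul_comm, h2]; ring
      calc (1 : Matrix (Fin d) (Fin d) ℝ) - M * Polynomial.aeval M ((1-q).divX)
          = Polynomial.aeval M (1 - X * (1-q).divX) := by
            simp only [map_sub, _root_.map_one, _root_.map_mul, Polynomial.aeval_X]
        _ = Polynomial.aeval M q := by rw [← h4]
    rw [hkey]
    -- spectral theorem
    set V : Matrix (Fin d) (Fin d) ℝ := (hM.eigenvectorUnitary : Matrix (Fin d) (Fin d) ℝ)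
      with hV
    have hVmem := hM.eigenvectorUnitary.2
    have hV1 : star V * V = 1 := hVmem.1
    have hV2 : V * star V = 1 := hVmem.2
    have hspec : M = V * Matrix.diagonal hM.eigenvalues * star V := by
      have h2 := hM.spectral_theorem
      simpa only [RCLike.ofReal_real_eq_id, CompTriple.comp_eq, Unitary.conjStarAlgAut_apply] using h2
    -- eigenvalues in [α, β]
    have heig : ∀ i, hM.eigenvalues i ∈ Set.Icc α β := by
      intro i
      have hvv : (V *ᵥ Pi.single i 1) ⬝ᵥ (V *ᵥ Pi.single i 1) = 1 := by
        rw [dot_conj V hV1]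
        simp [dotProduct, Pi.single_apply]
      have hde : diagonal hM.eigenvalues *ᵥ (Pi.single i 1 : Fin d → ℝ)
          = hM.eigenvalues i • (Pi.single i 1 : Fin d → ℝ) := by
        funext j
        by_cases hji : j = i <;>
          simp [Matrix.mulVec_diagonal, Pi.single_apply, hji]
      have hMv : M *ᵥ (V *ᵥ Pi.single i 1) = hM.eigenvalues i • (V *ᵥ Pi.single i 1) := by
        conv_lhs => rw [hspec]
        rw [Matrix.mulVec_mulVec, mul_assoc (V * diagonal hM.eigenvalues) (star V) V,
          hV1, mul_one, ← Matrix.mulVec_mulVec, hde, Matrix.mulVec_smul]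
      have h := hquad (V *ᵥ Pi.single i 1)
      rw [hMv, dotProduct_smul, hvv, smul_eq_mul] at h
      simp only [mul_one] at h
      exact Set.mem_Icc.mpr ⟨h.1, h.2⟩
    -- bound
    have hqM : Polynomial.aeval M q
        = V * Matrix.diagonal (fun i => q.eval (hM.eigenvalues i)) * star V := by
      conv_lhs => rw [hspec]
      exact aeval_conj V hV2 hV1 _ q
    rw [hqM]
    have hsplit : (V * Matrix.diagonal (fun i => q.eval (hM.eigenvalues i)) * star V) *ᵥ x
        = V *ᵥ ((Matrix.diagonal (fun i => q.eval (hM.eigenvalues i))) *ᵥ (star V *ᵥ x)) := by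
      rw [Matrix.mulVec_mulVec, Matrix.mulVec_mulVec]
    rw [hsplit]
    have e1 : eNorm (V *ᵥ ((Matrix.diagonal (fun i => q.eval (hM.eigenvalues i))) *ᵥ (star V *ᵥ x)))
        = eNorm ((Matrix.diagonal (fun i => q.eval (hM.eigenvalues i))) *ᵥ (star V *ᵥ x)) := by
      unfold eNorm; rw [dot_conj V hV1]
    have e2 : eNorm (star V *ᵥ x) = eNorm x := by
      unfold eNorm
      rw [dot_conj (star V) (by rw [star_star]; exact hV2) x]
    rw [e1]
    calc eNorm ((Matrix.diagonal (fun i => q.eval (hM.eigenvalues i))) *ᵥ (star V *ᵥ x))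
        ≤ 2 * Real.exp (-2 * t / Real.sqrt (β / α)) * eNorm (star V *ᵥ x) := by
          apply eNorm_diag_le _ _ hc0
          intro i
          exact hq_bound _ (heig i)
      _ = 2 * Real.exp (-2 * t / Real.sqrt (β / α)) * eNorm x := by rw [e2]

end aux
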